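/- Let S ⊆ {1,…,N}, δ ≥ 0, and α > 0 with αδ < 1, and suppose (1 − δ)‖x‖₂² ≤ ‖Φx‖₂² ≤ (1 + δ)‖x‖₂² for all x ∈ ℝ^N supported on S. Then for any vectors ũ, ã ∈ ℝ^N both supported on S with ‖ã‖₂ ≤ α·‖ũ‖₂, one has ũᵀ(ũ + (ΦᵀΦ − I)ã) ≥ (1 − αδ)·‖ũ‖₂². Consequently, along such a trajectory the energy E = (1/2)‖ũ‖₂² with τ·ũ̇ = −ũ − (ΦᵀΦ − I)ã satisfies the dissipation bound Ė ≤ −(2/τ)(1 − αδ)E. -/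

import Mathlib

open Matrix

lemma stmt15_Q {M N : ℕ} {Φ : Matrix (Fin M) (Fin N) ℝ} {S : Set (Fin N)} {δ : ℝ}
    (hRIP : ∀ x : Fin N → ℝ, (∀ n : Fin N, n ∉ S → x n = 0) →
      (1 - δ) * ∑ n, x n ^ 2 ≤ ∑ m, ((Φ *ᵥ x) m) ^ 2 ∧
        ∑ m, ((Φ *ᵥ x) m) ^ 2 ≤ (1 + δ) * ∑ n, x n ^ 2)
    (z : Fin N → ℝ) (hz : ∀ n, n ∉ S → z n = 0) :
    |(Φ *ᵥ z) ⬝ᵥ (Φ *ᵥ z) - z ⬝ᵥ z| ≤ δ * (z ⬝ᵥ z) := by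
  have h := hRIP z hz
  have h1 : z ⬝ᵥ z = ∑ n, z n ^ 2 := by simp [dotProduct, sq]
  have h2 : (Φ *ᵥ z) ⬝ᵥ (Φ *ᵥ z) = ∑ m, ((Φ *ᵥ z) m) ^ 2 := by
    simp [dotProduct, sq]
  rw [abs_le, h1, h2]
  constructor <;> nlinarith [h.1, h.2]

lemma stmt15_bil {M N : ℕ} {Φ : Matrix (Fin M) (Fin N) ℝ} {S : Set (Fin N)} {δ : ℝ}
    (hRIP : ∀ x : Fin N → ℝ, (∀ n : Fin N, n ∉ S → x n = 0) →
      (1 - δ) * ∑ n, x n ^ 2 ≤ ∑ m, ((Φ *ᵥ x) m) ^ 2 ∧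
        ∑ m, ((Φ *ᵥ x) m) ^ 2 ≤ (1 + δ) * ∑ n, x n ^ 2)
    (x y : Fin N → ℝ) (hx : ∀ n, n ∉ S → x n = 0) (hy : ∀ n, n ∉ S → y n = 0) :
    |(Φ *ᵥ x) ⬝ᵥ (Φ *ᵥ y) - x ⬝ᵥ y| ≤
      (δ / 2) * (x ⬝ᵥ x + y ⬝ᵥ y) := by
  have hplus : ∀ n, n ∉ S → (x + y) n = 0 := fun n hn => by
    simp [hx n hn, hy n hn]
  have hminus : ∀ n, n ∉ S → (x - y) n = 0 := fun n hn => by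
    simp [hx n hn, hy n hn]
  have hQp := stmt15_Q hRIP (x + y) hplus
  have hQm := stmt15_Q hRIP (x - y) hminus
  have c1 : y ⬝ᵥ x = x ⬝ᵥ y := dotProduct_comm _ _
  have c2 : (Φ *ᵥ y) ⬝ᵥ (Φ *ᵥ x) = (Φ *ᵥ x) ⬝ᵥ (Φ *ᵥ y) := dotProduct_comm _ _
  have hpol : 4 * ((Φ *ᵥ x) ⬝ᵥ (Φ *ᵥ y) - x ⬝ᵥ y) =
      ((Φ *ᵥ (x + y)) ⬝ᵥ (Φ *ᵥ (x + y)) - (x + y) ⬝ᵥ (x + y)) -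
      ((Φ *ᵥ (x - y)) ⬝ᵥ (Φ *ᵥ (x - y)) - (x - y) ⬝ᵥ (x - y)) := by
    simp only [mulVec_add, mulVec_sub, dotProduct_add, add_dotProduct,
      dotProduct_sub, sub_dotProduct, c1, c2]
    ring
  have hsum : (x + y) ⬝ᵥ (x + y) + (x - y) ⬝ᵥ (x - y) = 2 * (x ⬝ᵥ x + y ⬝ᵥ y) := by
    simp only [mulVec_add, mulVec_sub, dotProduct_add, add_dotProduct,
      dotProduct_sub, sub_dotProduct, c1]
    ring
  have hδsum : δ * ((x + y) ⬝ᵥ (x + y)) + δ * ((x - y) ⬝ᵥ (x - y)) =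
      δ * (2 * (x ⬝ᵥ x + y ⬝ᵥ y)) := by rw [← mul_add, hsum]
  rw [abs_le] at hQp hQm ⊢
  constructor <;> linarith [hQp.1, hQp.2, hQm.1, hQm.2]

lemma stmt15_bil' {M N : ℕ} {Φ : Matrix (Fin M) (Fin N) ℝ} {S : Set (Fin N)} {δ : ℝ}
    (hδ : 0 ≤ δ)
    (hRIP : ∀ x : Fin N → ℝ, (∀ n : Fin N, n ∉ S → x n = 0) →
      (1 - δ) * ∑ n, x n ^ 2 ≤ ∑ m, ((Φ *ᵥ x) m) ^ 2 ∧
        ∑ m, ((Φ *ᵥ x) m) ^ 2 ≤ (1 + δ) * ∑ n, x n ^ 2)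
    (x y : Fin N → ℝ) (hx : ∀ n, n ∉ S → x n = 0) (hy : ∀ n, n ∉ S → y n = 0) :
    |(Φ *ᵥ x) ⬝ᵥ (Φ *ᵥ y) - x ⬝ᵥ y| ≤
      δ * Real.sqrt (x ⬝ᵥ x) * Real.sqrt (y ⬝ᵥ y) := by
  have hxx : 0 ≤ x ⬝ᵥ x := Finset.sum_nonneg fun i _ => mul_self_nonneg _
  have hyy : 0 ≤ y ⬝ᵥ y := Finset.sum_nonneg fun i _ => mul_self_nonneg _
  by_cases hx0 : x = 0
  · simp [hx0]
  by_cases hy0 : y = 0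
  · simp [hy0]
  set a := Real.sqrt (x ⬝ᵥ x) with ha
  set b := Real.sqrt (y ⬝ᵥ y) with hb
  have ha2 : a ^ 2 = x ⬝ᵥ x := Real.sq_sqrt hxx
  have hb2 : b ^ 2 = y ⬝ᵥ y := Real.sq_sqrt hyy
  have hxxpos : 0 < x ⬝ᵥ x :=
    lt_of_le_of_ne hxx (fun h => hx0 (dotProduct_self_eq_zero.mp h.symm))
  have hyypos : 0 < y ⬝ᵥ y :=
    lt_of_le_of_ne hyy (fun h => hy0 (dotProduct_self_eq_zero.mp h.symm))
  have hapos : 0 < a := Real.sqrt_pos.mpr hxxpos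
  have hbpos : 0 < b := Real.sqrt_pos.mpr hyypos
  -- normalize
  have hx' : ∀ n, n ∉ S → (a⁻¹ • x) n = 0 := fun n hn => by
    simp [hx n hn]
  have hy' : ∀ n, n ∉ S → (b⁻¹ • y) n = 0 := fun n hn => by
    simp [hy n hn]
  have key := stmt15_bil hRIP (a⁻¹ • x) (b⁻¹ • y) hx' hy'
  have e1 : (a⁻¹ • x) ⬝ᵥ (a⁻¹ • x) = 1 := by
    rw [smul_dotProduct, dotProduct_smul, smul_eq_mul, smul_eq_mul, ← ha2]
    field_simp
  have e2 : (b⁻¹ • y) ⬝ᵥ (b⁻¹ • y) = 1 := by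
    rw [smul_dotProduct, dotProduct_smul, smul_eq_mul, smul_eq_mul, ← hb2]
    field_simp
  have e3 : (Φ *ᵥ (a⁻¹ • x)) ⬝ᵥ (Φ *ᵥ (b⁻¹ • y)) - (a⁻¹ • x) ⬝ᵥ (b⁻¹ • y)
      = (a⁻¹ * b⁻¹) * ((Φ *ᵥ x) ⬝ᵥ (Φ *ᵥ y) - x ⬝ᵥ y) := by
    rw [mulVec_smul, mulVec_smul, smul_dotProduct, dotProduct_smul,
      smul_dotProduct, dotProduct_smul, smul_eq_mul, smul_eq_mul,
      smul_eq_mul, smul_eq_mul]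
    ring
  rw [e1, e2, e3, abs_mul, abs_of_pos (by positivity)] at key
  have : |(Φ *ᵥ x) ⬝ᵥ (Φ *ᵥ y) - x ⬝ᵥ y| ≤ (a * b) * (δ / 2 * (1 + 1)) := by
    rw [← mul_le_mul_iff_right₀ (show (0:ℝ) < a⁻¹ * b⁻¹ by positivity)]
    calc a⁻¹ * b⁻¹ * |(Φ *ᵥ x) ⬝ᵥ (Φ *ᵥ y) - x ⬝ᵥ y| ≤ δ / 2 * (1 + 1) := key
    _ = a⁻¹ * b⁻¹ * ((a * b) * (δ / 2 * (1 + 1))) := by field_simp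
  calc |(Φ *ᵥ x) ⬝ᵥ (Φ *ᵥ y) - x ⬝ᵥ y| ≤ (a * b) * (δ / 2 * (1 + 1)) := this
  _ = δ * a * b := by ring

theorem stmt15 {M N : ℕ} (hM : 0 < M) (hN : 0 < N)
    (Φ : Matrix (Fin M) (Fin N) ℝ) (τ : ℝ) (hτ : 0 < τ)
    (S : Set (Fin N)) (δ α : ℝ) (hδ : 0 ≤ δ) (hα : 0 < α) (hαδ : α * δ < 1)
    (hRIP : ∀ x : Fin N → ℝ, (∀ n : Fin N, n ∉ S → x n = 0) →
      (1 - δ) * ∑ n, x n ^ 2 ≤ ∑ m, ((Φ *ᵥ x) m) ^ 2 ∧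
        ∑ m, ((Φ *ᵥ x) m) ^ 2 ≤ (1 + δ) * ∑ n, x n ^ 2) :
    (∀ utilde atilde : Fin N → ℝ,
      (∀ n : Fin N, n ∉ S → utilde n = 0) →
      (∀ n : Fin N, n ∉ S → atilde n = 0) →
      Real.sqrt (∑ n, atilde n ^ 2) ≤ α * Real.sqrt (∑ n, utilde n ^ 2) →
      (1 - α * δ) * ∑ n, utilde n ^ 2 ≤
        utilde ⬝ᵥ (utilde + (Φᵀ * Φ - 1) *ᵥ atilde))
    ∧
    (∀ utilde utilde' atilde : ℝ → Fin N → ℝ,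
      (∀ t : ℝ, HasDerivAt utilde (utilde' t) t) →
      (∀ t : ℝ, τ • utilde' t = -(utilde t) - (Φᵀ * Φ - 1) *ᵥ atilde t) →
      (∀ t : ℝ, ∀ n : Fin N, n ∉ S → utilde t n = 0) →
      (∀ t : ℝ, ∀ n : Fin N, n ∉ S → atilde t n = 0) →
      (∀ t : ℝ, Real.sqrt (∑ n, atilde t n ^ 2) ≤
        α * Real.sqrt (∑ n, utilde t n ^ 2)) →
      ∀ t : ℝ,
        HasDerivAt (fun s => (1 / 2) * ∑ n, utilde s n ^ 2)
          (∑ n, utilde t n * utilde' t n) t ∧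
        ∑ n, utilde t n * utilde' t n ≤
          -(2 / τ) * (1 - α * δ) * ((1 / 2) * ∑ n, utilde t n ^ 2)) := by
  have key : ∀ utilde atilde : Fin N → ℝ,
      (∀ n : Fin N, n ∉ S → utilde n = 0) →
      (∀ n : Fin N, n ∉ S → atilde n = 0) →
      Real.sqrt (∑ n, atilde n ^ 2) ≤ α * Real.sqrt (∑ n, utilde n ^ 2) →
      (1 - α * δ) * ∑ n, utilde n ^ 2 ≤
        utilde ⬝ᵥ (utilde + (Φᵀ * Φ - 1) *ᵥ atilde) := by
    intro u a hu ha hnorm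
    have hud : u ⬝ᵥ u = ∑ n, u n ^ 2 := by simp [dotProduct, sq]
    have had : a ⬝ᵥ a = ∑ n, a n ^ 2 := by simp [dotProduct, sq]
    have hexp : u ⬝ᵥ (u + (Φᵀ * Φ - 1) *ᵥ a) =
        u ⬝ᵥ u + ((Φ *ᵥ u) ⬝ᵥ (Φ *ᵥ a) - u ⬝ᵥ a) := by
      rw [dotProduct_add, sub_mulVec, one_mulVec, dotProduct_sub,
        ← mulVec_mulVec, dotProduct_mulVec, vecMul_transpose]
    have hbil := stmt15_bil' hδ hRIP u a hu ha
    have hsnn : 0 ≤ ∑ n, u n ^ 2 := Finset.sum_nonneg fun i _ => sq_nonneg _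
    have hsq : Real.sqrt (∑ n, u n ^ 2) * Real.sqrt (∑ n, u n ^ 2) = ∑ n, u n ^ 2 :=
      Real.mul_self_sqrt hsnn
    have hchain : δ * Real.sqrt (u ⬝ᵥ u) * Real.sqrt (a ⬝ᵥ a) ≤
        α * δ * ∑ n, u n ^ 2 := by
      rw [hud, had]
      calc δ * Real.sqrt (∑ n, u n ^ 2) * Real.sqrt (∑ n, a n ^ 2)
          ≤ δ * Real.sqrt (∑ n, u n ^ 2) * (α * Real.sqrt (∑ n, u n ^ 2)) := by
            apply mul_le_mul_of_nonneg_left hnorm (by positivity)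
        _ = α * δ * (Real.sqrt (∑ n, u n ^ 2) * Real.sqrt (∑ n, u n ^ 2)) := by ring
        _ = α * δ * ∑ n, u n ^ 2 := by rw [hsq]
    have habs := (abs_le.mp hbil).1
    rw [hexp, hud]
    nlinarith [habs, hchain]
  refine ⟨key, ?_⟩
  intro u u' a hderiv heq hu ha hnorm t
  have hdn : ∀ n, HasDerivAt (fun s => u s n) (u' t n) t :=
    fun n => hasDerivAt_pi.mp (hderiv t) n
  have hds : HasDerivAt (fun s => (1 / 2 : ℝ) * ∑ n, u s n ^ 2)
      (∑ n, u t n * u' t n) t := by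
    have h1 : HasDerivAt (fun s => ∑ n, u s n ^ 2)
        (∑ n : Fin N, 2 * u t n ^ 1 * u' t n) t :=
      HasDerivAt.fun_sum fun n _ => by simpa using (hdn n).fun_pow 2
    have := h1.const_mul (1 / 2 : ℝ)
    refine this.congr_deriv ?_; symm
    rw [Finset.mul_sum]
    apply Finset.sum_congr rfl
    intro n _
    ring
  refine ⟨hds, ?_⟩
  have heqn : ∀ n, τ * u' t n = -(u t n) - ((Φᵀ * Φ - 1) *ᵥ a t) n := by
    intro n
    have := congrFun (heq t) n
    simpa using this
  have hdot : ∑ n, u t n * u' t n =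
      -(τ⁻¹) * (u t ⬝ᵥ (u t + (Φᵀ * Φ - 1) *ᵥ a t)) := by
    have : ∀ n, u t n * u' t n = -(τ⁻¹) * (u t n * (u t n + ((Φᵀ * Φ - 1) *ᵥ a t) n)) := by
      intro n
      have h := heqn n
      have hτ' : τ ≠ 0 := ne_of_gt hτ
      have hu' : u' t n = τ⁻¹ * (-(u t n) - ((Φᵀ * Φ - 1) *ᵥ a t) n) := by
        field_simp
        linarith [h]
      rw [hu']
      ring
    rw [Finset.sum_congr rfl fun n _ => this n]
    rw [dotProduct_add]
    simp only [dotProduct, Pi.add_apply]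
    rw [← Finset.mul_sum, ← Finset.sum_add_distrib]
    congr 1
    apply Finset.sum_congr rfl
    intro n _
    ring
  have hk := key (u t) (a t) (hu t) (ha t) (hnorm t)
  have hsnn : 0 ≤ ∑ n, u t n ^ 2 := Finset.sum_nonneg fun i _ => sq_nonneg _
  rw [hdot]
  have hτinv : 0 < τ⁻¹ := inv_pos.mpr hτ
  calc -(τ⁻¹) * (u t ⬝ᵥ (u t + (Φᵀ * Φ - 1) *ᵥ a t))
      ≤ -(τ⁻¹) * ((1 - α * δ) * ∑ n, u t n ^ 2) := by nlinarith [hk]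
    _ = -(2 / τ) * (1 - α * δ) * ((1 / 2) * ∑ n, u t n ^ 2) := by
        field_simp
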